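/- For each x ∈ X and each k ∈ ℕ there exists a unique partition of ℤ into consecutive intervals of length 2^k — i.e., a unique offset r ∈ {0,…,2^k−1}, the intervals being [r + m·2^k, r + (m+1)·2^k) for m ∈ ℤ — such that the subword of x on each interval of the partition is either u_k or ū_k. -/

import Mathlib

/-- The substitution σ on symbols: σ(0) = 01, σ(1) = 10 (with 0 ↔ `false`, 1 ↔ `true`). -/
def sigmaSub (b : Bool) : List Bool := [b, !b]

/-- The substitution σ extended to words by concatenation. -/
def subst (w : List Bool) : List Bool := w.flatMap sigmaSub

/-- The flip of a binary word: exchange 0 and 1 in every position. -/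
def flipWord (w : List Bool) : List Bool := w.map (fun b => !b)

/-- u_k = σ^k(0). -/
def uWord : ℕ → List Bool
  | 0 => [false]
  | k + 1 => subst (uWord k)

/-- The Morse sequence: its first 2^k symbols form the word u_k for every k. -/
def morse (n : ℕ) : Bool := (uWord (n + 1)).getD n false

/-- The subword of `x` on the interval `[p, p + w.length)` is the word `w`. -/
def readsWord (x : ℤ → Bool) (p : ℤ) (w : List Bool) : Prop :=
  ∀ j : ℕ, j < w.length → x (p + j) = w.getD j false

/-- The Morse minimal set X: bi-infinite sequences all of whose finite subwords
occur in the Morse sequence. -/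
def morseShiftX : Set (ℤ → Bool) :=
  {x | ∀ (a : ℤ) (l : ℕ), ∃ s : ℕ, ∀ j : ℕ, j < l → x (a + j) = morse (s + j)}

/-- The left shift T. -/
def shiftT (x : ℤ → Bool) : ℤ → Bool := fun i => x (i + 1)


lemma subst_cons (b : Bool) (w : List Bool) : subst (b :: w) = b :: (!b) :: subst w := rfl

lemma subst_length (w : List Bool) : (subst w).length = 2 * w.length := by
  induction w with
  | nil => rfl
  | cons b w ih => rw [subst_cons]; simp [ih]; omega

lemma subst_getD_even (w : List Bool) (q : ℕ) (hq : q < w.length) :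
    (subst w).getD (2*q) false = w.getD q false := by
  induction w generalizing q with
  | nil => simp at hq
  | cons b w ih =>
    cases q with
    | zero => rfl
    | succ q =>
      have h2 : 2*(q+1) = (2*q) + 1 + 1 := by ring
      rw [subst_cons, h2, List.getD_cons_succ, List.getD_cons_succ, List.getD_cons_succ]
      exact ih q (by simpa using hq)

lemma subst_getD_odd (w : List Bool) (q : ℕ) (hq : q < w.length) :
    (subst w).getD (2*q+1) false = !(w.getD q false) := by
  induction w generalizing q with
  | nil => simp at hq
  | cons b w ih =>
    cases q with
    | zero => rfl
    | succ q =>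
      have h2 : 2*(q+1)+1 = (2*q+1) + 1 + 1 := by ring
      rw [subst_cons, h2, List.getD_cons_succ, List.getD_cons_succ, List.getD_cons_succ]
      exact ih q (by simpa using hq)

lemma flipWord_length (w : List Bool) : (flipWord w).length = w.length := by
  simp [flipWord]

lemma flipWord_getD (w : List Bool) (j : ℕ) (hj : j < w.length) :
    (flipWord w).getD j false = !(w.getD j false) := by
  induction w generalizing j with
  | nil => simp at hj
  | cons b w ih =>
    cases j with
    | zero => rfl
    | succ j =>
      show (flipWord w).getD j false = _
      exact ih j (by simpa using hj)

lemma subst_flip (w : List Bool) : subst (flipWord w) = flipWord (subst w) := by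
  induction w with
  | nil => rfl
  | cons b w ih =>
    show subst ((!b) :: flipWord w) = _
    rw [subst_cons, subst_cons, ih]
    rfl

lemma subst_append (a b : List Bool) : subst (a ++ b) = subst a ++ subst b :=
  List.flatMap_append ..

lemma uWord_length (k : ℕ) : (uWord k).length = 2^k := by
  induction k with
  | zero => rfl
  | succ k ih => show (subst (uWord k)).length = _; rw [subst_length, ih, pow_succ]; ring

lemma uWord_succ (k : ℕ) : uWord (k+1) = uWord k ++ flipWord (uWord k) := by
  induction k with
  | zero => rfl
  | succ k ih =>
    calc uWord (k+2) = subst (uWord k ++ flipWord (uWord k)) := by rw [← ih]; rfl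
      _ = subst (uWord k) ++ subst (flipWord (uWord k)) := subst_append ..
      _ = uWord (k+1) ++ flipWord (uWord (k+1)) := by rw [subst_flip]; rfl


lemma uWord_getD_mono (k n : ℕ) (h : n < 2^k) (k' : ℕ) (hk : k ≤ k') :
    (uWord k').getD n false = (uWord k).getD n false := by
  induction k', hk using Nat.le_induction with
  | base => rfl
  | succ k' hk ih =>
    rw [uWord_succ, List.getD_append _ _ _ _ (by
      rw [uWord_length]
      exact lt_of_lt_of_le h (Nat.pow_le_pow_right (by norm_num) hk))]
    exact ih

lemma morse_eq (k n : ℕ) (h : n < 2^k) : morse n = (uWord k).getD n false := by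
  have h1 : n < 2^(n+1) :=
    lt_of_lt_of_le (Nat.lt_two_pow_self (n := n)) (Nat.pow_le_pow_right (by norm_num) (by omega))
  show (uWord (n+1)).getD n false = _
  rcases le_total k (n+1) with hle | hle
  · exact uWord_getD_mono k n h (n+1) hle
  · exact (uWord_getD_mono (n+1) n h1 k hle).symm

lemma morse_two_mul (n : ℕ) : morse (2*n) = morse n := by
  have hn : n < 2^n := Nat.lt_two_pow_self (n := n)
  have h2 : 2*n < 2^(n+1) := by rw [pow_succ]; omega
  rw [morse_eq (n+1) (2*n) h2, morse_eq n n hn]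
  exact subst_getD_even _ n (by rw [uWord_length]; exact hn)

lemma morse_two_mul_add_one (n : ℕ) : morse (2*n+1) = !(morse n) := by
  have hn : n < 2^n := Nat.lt_two_pow_self (n := n)
  have h2 : 2*n+1 < 2^(n+1) := by rw [pow_succ]; omega
  rw [morse_eq (n+1) (2*n+1) h2, morse_eq n n hn]
  exact subst_getD_odd _ n (by rw [uWord_length]; exact hn)

lemma morse_flip (k j : ℕ) (h : j < 2^k) : morse (2^k + j) = !(morse j) := by
  have h2 : 2^k + j < 2^(k+1) := by rw [pow_succ]; omega
  rw [morse_eq (k+1) _ h2, morse_eq k j h, uWord_succ]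
  rw [show 2^k + j = (uWord k).length + j by rw [uWord_length], List.getD_append_right _ _ _ _ (by omega)]
  simp only [Nat.add_sub_cancel_left]
  exact flipWord_getD _ j (by rw [uWord_length]; exact h)

lemma no_triple (n : ℕ) : ¬ (morse n = morse (n+1) ∧ morse (n+1) = morse (n+2)) := by
  rintro ⟨h1, h2⟩
  rcases Nat.even_or_odd n with he | ho
  · obtain ⟨m, hm⟩ : ∃ m, n = 2*m := by rcases he with ⟨m, hm⟩; exact ⟨m, by omega⟩
    subst hm
    rw [morse_two_mul, morse_two_mul_add_one] at h1
    simp at h1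
  · obtain ⟨m, hm⟩ : ∃ m, n = 2*m+1 := ho
    subst hm
    have h2' : morse (2*(m+1)) = morse (2*(m+1)+1) := by
      convert h2 using 2 <;> omega
    rw [morse_two_mul, morse_two_mul_add_one] at h2'
    simp at h2'

lemma double_odd (s : ℕ) (h : morse s = morse (s+1)) : s % 2 = 1 := by
  by_contra hc
  obtain ⟨m, hm⟩ : ∃ m, s = 2*m := ⟨s/2, by omega⟩
  subst hm
  rw [morse_two_mul, morse_two_mul_add_one] at h
  simp at h

lemma no_alt (s : ℕ) : ¬ (∀ j, j < 4 → morse (s+j) ≠ morse (s+j+1)) := by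
  intro h
  obtain ⟨m, hm⟩ : ∃ m, s + 1 = 2*m + 1 ∨ s = 2*m + 1 := by
    rcases Nat.even_or_odd s with ⟨m, hm⟩ | ⟨m, hm⟩
    · exact ⟨m, Or.inl (by omega)⟩
    · exact ⟨m, Or.inr (by omega)⟩
  apply no_triple m
  have key : ∀ m' : ℕ, morse (2*m'+1) ≠ morse (2*m'+2) → morse m' = morse (m'+1) := by
    intro m' hne
    rw [morse_two_mul_add_one, show 2*m'+2 = 2*(m'+1) by ring, morse_two_mul] at hne
    revert hne
    cases hm' : morse m' <;> cases hm'' : morse (m'+1) <;> simp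
  rcases hm with hm | hm
  · -- s = 2m, use j = 1 and j = 3
    have e1 := key m (by have := h 1 (by omega); convert this using 2 <;> omega)
    have e2 := key (m+1) (by have := h 3 (by omega); convert this using 2 <;> omega)
    exact ⟨e1, e2⟩
  · -- s = 2m+1, use j = 0 and j = 2
    have e1 := key m (by have := h 0 (by omega); convert this using 2 <;> omega)
    have e2 := key (m+1) (by have := h 2 (by omega); convert this using 2 <;> omega)
    exact ⟨e1, e2⟩


lemma exists_double (x : ℤ → Bool) (hx : x ∈ morseShiftX) : ∃ i : ℤ, x i = x (i+1) := by
  obtain ⟨s, hs⟩ := hx 0 5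
  by_contra hcon
  push_neg at hcon
  apply no_alt s
  intro j hj heq
  apply hcon ((j : ℤ))
  have e1 := hs j (by omega)
  have e2 := hs (j+1) (by omega)
  push_cast at e1 e2
  rw [show (0:ℤ) + j = (j:ℤ) by ring] at e1
  rw [show (0:ℤ) + (j+1) = (j:ℤ) + 1 by ring] at e2
  rw [e1, e2, heq]
  congr 1

lemma double_parity (x : ℤ → Bool) (hx : x ∈ morseShiftX) : ∀ (i i' : ℤ), x i = x (i+1) →
    x i' = x (i'+1) → (i' - i) % 2 = 0 := by
  have key : ∀ (i i' : ℤ), i ≤ i' → x i = x (i+1) → x i' = x (i'+1) → (i' - i) % 2 = 0 := by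
    intro i i' hle h h'
    obtain ⟨d, hd⟩ : ∃ d : ℕ, i' = i + d := ⟨(i'-i).toNat, by omega⟩
    obtain ⟨s, hs⟩ := hx i (d+2)
    have e0 := hs 0 (by omega)
    have e1 := hs 1 (by omega)
    have ed := hs d (by omega)
    have ed1 := hs (d+1) (by omega)
    push_cast at e0 e1 ed ed1
    have e0' : x i = morse s := by simpa using e0
    have e1' : x (i+1) = morse (s+1) := by simpa using e1
    have hs1 : morse s = morse (s+1) := by rw [← e0', ← e1']; exact h
    have ed' : x i' = morse (s+d) := by rw [hd]; exact ed
    have ed1' : x (i'+1) = morse (s+d+1) := by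
      rw [hd, show i + (d:ℤ) + 1 = i + ((d:ℤ)+1) by ring]
      exact ed1
    have hsd : morse (s+d) = morse (s+d+1) := by rw [← ed', ← ed1']; exact h'
    have o1 := double_odd s hs1
    have o2 := double_odd (s+d) hsd
    omega
  intro i i' h h'
  rcases le_total i i' with hle | hle
  · exact key i i' hle h h'
  · have := key i' i hle h' h; omega

lemma bool_aux : ∀ a b : Bool, ¬ (a = !b) → b = a := by decide

lemma pairing (x : ℤ → Bool) (hx : x ∈ morseShiftX) :
    ∃ t : ℕ, t < 2 ∧ (∀ m : ℤ, x ((t:ℤ) + 2*m + 1) = !(x ((t:ℤ) + 2*m))) ∧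
      ∀ t' : ℕ, t' < 2 → (∀ m : ℤ, x ((t':ℤ) + 2*m + 1) = !(x ((t':ℤ) + 2*m))) → t' = t := by
  obtain ⟨i0, hi0⟩ := exists_double x hx
  obtain ⟨t, htlt, htpar⟩ : ∃ t : ℕ, t < 2 ∧ (i0 - t) % 2 = 1 := by
    refine ⟨if i0 % 2 = 0 then 1 else 0, ?_, ?_⟩ <;> split <;> omega
  have claim : ∀ t' : ℕ, (∀ m : ℤ, x ((t':ℤ) + 2*m + 1) = !(x ((t':ℤ) + 2*m))) →
      (i0 - t') % 2 ≠ 0 := by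
    intro t' hval hpar
    obtain ⟨m, hm⟩ : ∃ m : ℤ, i0 = (t':ℤ) + 2*m := ⟨(i0-t')/2, by omega⟩
    have := hval m
    rw [← hm] at this
    rw [this] at hi0
    simp at hi0
  refine ⟨t, htlt, ?_, ?_⟩
  · intro m
    by_contra hne
    have hd : x ((t:ℤ)+2*m) = x ((t:ℤ)+2*m+1) := bool_aux _ _ hne
    have := double_parity x hx ((t:ℤ)+2*m) i0 hd hi0
    omega
  · intro t' ht' hval
    have := claim t' hval
    omega

lemma derived_mem (x : ℤ → Bool) (hx : x ∈ morseShiftX) (t : ℤ) :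
    (fun n : ℤ => x (t + 2*n)) ∈ morseShiftX := by
  intro a l
  obtain ⟨s, hs⟩ := hx (t + 2*a) (2*l)
  have key : ∀ j : ℕ, j < l → x (t + 2*(a + (j:ℤ))) = morse (s + 2*j) := by
    intro j hj
    have := hs (2*j) (by omega)
    push_cast at this
    rw [show t + 2*a + 2*(j:ℤ) = t + 2*(a + j) by ring] at this
    exact this
  rcases Nat.even_or_odd s with ⟨p, hp⟩ | ⟨p, hp⟩
  · refine ⟨p, fun j hj => ?_⟩
    have := key j hj
    rw [show s + 2*j = 2*(p+j) by omega, morse_two_mul] at this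
    exact this
  · have hplt : p + l ≤ 2^(p+l) := le_of_lt Nat.lt_two_pow_self
    refine ⟨2^(p+l) + p, fun j hj => ?_⟩
    have := key j hj
    rw [show s + 2*j = 2*(p+j)+1 by omega, morse_two_mul_add_one] at this
    rw [show 2^(p+l) + p + j = 2^(p+l) + (p+j) by ring, morse_flip _ _ (by omega)]
    exact this


lemma bridge (x : ℤ → Bool) (t : ℤ) (ht : ∀ m : ℤ, x (t + 2*m + 1) = !(x (t + 2*m)))
    (p : ℤ) (w : List Bool) :
    readsWord x (t + 2*p) (subst w) ↔ readsWord (fun n => x (t + 2*n)) p w := by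
  constructor
  · intro h j hj
    have h1 := h (2*j) (by rw [subst_length]; omega)
    rw [subst_getD_even w j hj] at h1
    show x (t + 2*(p + (j:ℤ))) = _
    rw [show t + 2*(p + (j:ℤ)) = t + 2*p + ((2*j:ℕ):ℤ) by push_cast; ring]
    exact h1
  · intro h j hj
    rw [subst_length] at hj
    rcases Nat.even_or_odd j with ⟨q, hq⟩ | ⟨q, hq⟩
    · have hq' : j = 2*q := by omega
      subst hq'
      rw [subst_getD_even w q (by omega)]
      have h1 := h q (by omega)
      show x (t + 2*p + ((2*q:ℕ):ℤ)) = _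
      rw [show t + 2*p + ((2*q:ℕ):ℤ) = t + 2*(p + (q:ℤ)) by push_cast; ring]
      exact h1
    · subst hq
      rw [subst_getD_odd w q (by omega)]
      have h1 := h q (by omega)
      have h2 := ht (p + q)
      show x (t + 2*p + ((2*q+1:ℕ):ℤ)) = _
      rw [show t + 2*p + ((2*q+1:ℕ):ℤ) = t + 2*(p + (q:ℤ)) + 1 by push_cast; ring]
      rw [h2]
      exact congrArg (!·) h1

lemma alternating_block (k j : ℕ) (hje : j % 2 = 0) (hj : j + 1 < 2^(k+1)) (w : List Bool)
    (hw : w = uWord (k+1) ∨ w = flipWord (uWord (k+1))) :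
    w.getD (j+1) false = !(w.getD j false) := by
  obtain ⟨q, hq⟩ : ∃ q, j = 2*q := ⟨j/2, by omega⟩
  subst hq
  have hqlt : q < 2^k := by rw [pow_succ] at hj; omega
  have hu : (uWord (k+1)).getD (2*q+1) false = !((uWord (k+1)).getD (2*q) false) := by
    show (subst (uWord k)).getD (2*q+1) false = !((subst (uWord k)).getD (2*q) false)
    rw [subst_getD_odd _ q (by rw [uWord_length]; exact hqlt),
        subst_getD_even _ q (by rw [uWord_length]; exact hqlt)]
  rcases hw with rfl | rfl
  · exact hu
  · rw [flipWord_getD _ _ (by rw [uWord_length]; omega),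
        flipWord_getD _ _ (by rw [uWord_length]; omega), hu]


/-- For each x ∈ X and k ∈ ℕ there is a unique offset r ∈ {0,…,2^k−1} such that on
each interval [r + m·2^k, r + (m+1)·2^k) the subword of x is u_k or ū_k. -/
theorem morse_unique_partition :
    ∀ x ∈ morseShiftX, ∀ k : ℕ,
      ∃! r : ℕ, r < 2 ^ k ∧ ∀ m : ℤ,
        readsWord x ((r : ℤ) + m * 2 ^ k) (uWord k) ∨
        readsWord x ((r : ℤ) + m * 2 ^ k) (flipWord (uWord k)) := by
  intro x hx k
  induction k generalizing x with
  | zero =>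
    refine ⟨0, ⟨by norm_num, fun m => ?_⟩, fun r hr => by
      have h1 : r < 1 := by simpa using hr.1
      omega⟩
    cases h : x (((0:ℕ):ℤ) + m * 2^0) with
    | false =>
      left
      intro j hj
      have hj0 : j = 0 := by simp [uWord] at hj; omega
      subst hj0
      simpa [uWord] using h
    | true =>
      right
      intro j hj
      have hj0 : j = 0 := by simp [uWord, flipWord] at hj; omega
      subst hj0
      simpa [uWord, flipWord] using h
  | succ k ih =>
    obtain ⟨t, ht2, htv, htu⟩ := pairing x hx
    have hy : (fun n : ℤ => x ((t:ℤ) + 2*n)) ∈ morseShiftX := derived_mem x hx (t:ℤ)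
    obtain ⟨r', ⟨hr'lt, hr'v⟩, hr'u⟩ := ih _ hy
    have hflip : flipWord (uWord (k+1)) = subst (flipWord (uWord k)) := by
      rw [show uWord (k+1) = subst (uWord k) from rfl, subst_flip]
    refine ⟨t + 2*r', ⟨by rw [pow_succ]; omega, fun m => ?_⟩, ?_⟩
    · have key : ((t + 2*r' : ℕ) : ℤ) + m * 2^(k+1) = (t:ℤ) + 2*((r':ℤ) + m * 2^k) := by
        push_cast [pow_succ]; ring
      rw [key]
      rcases hr'v m with h | h
      · left
        exact (bridge x t htv _ (uWord k)).mpr h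
      · right
        rw [hflip]
        exact (bridge x t htv _ (flipWord (uWord k))).mpr h
    · rintro r₂ ⟨hr₂lt, hr₂v⟩
      have hNlen : (uWord (k+1)).length = 2^(k+1) := uWord_length _
      have hFlen : (flipWord (uWord (k+1))).length = 2^(k+1) := by
        rw [flipWord_length]; exact hNlen
      -- Step 1: r₂ % 2 is a valid pairing offset, hence equals t.
      have hpair2 : ∀ m : ℤ, x (((r₂ % 2 : ℕ):ℤ) + 2*m + 1) = !(x (((r₂ % 2:ℕ):ℤ) + 2*m)) := by
        intro m
        set q : ℤ := ((r₂ % 2 : ℕ) : ℤ) + 2*m with hqdef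
        have hNpos : (0:ℤ) < (2:ℤ)^(k+1) := by positivity
        set d : ℤ := q - (r₂:ℤ) with hddef
        have hd2 : d % 2 = 0 := by omega
        set m' : ℤ := d / ((2:ℤ)^(k+1)) with hm'def
        set e : ℤ := d % ((2:ℤ)^(k+1)) with hedef
        have he0 : 0 ≤ e := Int.emod_nonneg d (by positivity)
        have he1 : e < (2:ℤ)^(k+1) := Int.emod_lt_of_pos d hNpos
        have hde : (2:ℤ)^(k+1) * m' + e = d := Int.mul_ediv_add_emod d _
        obtain ⟨C, hC⟩ : ∃ C : ℤ, 2*C + e = d := ⟨(2:ℤ)^k * m', by rw [← hde, pow_succ]; ring⟩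
        have hcast : ((2^(k+1) : ℕ) : ℤ) = (2:ℤ)^(k+1) := by push_cast; ring
        have he1' : e < ((2^(k+1) : ℕ) : ℤ) := by rw [hcast]; exact he1
        set j : ℕ := e.toNat with hjdef
        have hje : (j:ℤ) = e := Int.toNat_of_nonneg he0
        have hNN : (2^(k+1) : ℕ) = 2 * 2^k := by ring
        have hjlt : j + 1 < 2^(k+1) := by omega
        have hjpar : j % 2 = 0 := by omega
        have hde' : m' * (2:ℤ)^(k+1) + e = d := by rw [← hde]; ring
        have hq1 : q = (r₂:ℤ) + m' * (2:ℤ)^(k+1) + (j:ℤ) := by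
          rw [hje]; linarith [hde']
        have hq2 : q + 1 = (r₂:ℤ) + m' * (2:ℤ)^(k+1) + ((j+1:ℕ):ℤ) := by
          push_cast
          rw [hje]; linarith [hde']
        show x (q + 1) = !(x q)
        rw [hq2, hq1]
        rcases hr₂v m' with hw | hw
        · have e1 := hw j (by rw [hNlen]; omega)
          have e2 := hw (j+1) (by rw [hNlen]; omega)
          rw [e1, e2]
          exact alternating_block k j hjpar hjlt _ (Or.inl rfl)
        · have e1 := hw j (by rw [hFlen]; omega)
          have e2 := hw (j+1) (by rw [hFlen]; omega)
          rw [e1, e2]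
          exact alternating_block k j hjpar hjlt _ (Or.inr rfl)
      have ht2' : r₂ % 2 = t := htu (r₂ % 2) (by omega) hpair2
      -- Step 2: r₂ / 2 is valid for the derived sequence.
      have key2 : ∀ m : ℤ, ((r₂:ℕ):ℤ) + m*2^(k+1) = (t:ℤ) + 2*(((r₂/2 : ℕ):ℤ) + m*2^k) := by
        intro m
        have hc : ((r₂:ℕ):ℤ) = (t:ℤ) + 2*((r₂/2 : ℕ):ℤ) := by omega
        rw [hc, pow_succ]; ring
      have hval' : ∀ m : ℤ,
          readsWord (fun n : ℤ => x ((t:ℤ) + 2*n)) (((r₂/2 : ℕ):ℤ) + m*2^k) (uWord k) ∨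
          readsWord (fun n : ℤ => x ((t:ℤ) + 2*n)) (((r₂/2 : ℕ):ℤ) + m*2^k) (flipWord (uWord k)) := by
        intro m
        rcases hr₂v m with h | h
        · left
          apply (bridge x t htv _ (uWord k)).mp
          show readsWord x ((t:ℤ) + 2*(((r₂/2 : ℕ):ℤ) + m*2^k)) (subst (uWord k))
          rw [← key2 m]
          exact h
        · right
          apply (bridge x t htv _ (flipWord (uWord k))).mp
          show readsWord x ((t:ℤ) + 2*(((r₂/2 : ℕ):ℤ) + m*2^k)) (subst (flipWord (uWord k)))
          rw [← key2 m, ← hflip]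
          exact h
      have hfin : r₂/2 = r' := hr'u (r₂/2) ⟨by rw [pow_succ] at hr₂lt; omega, hval'⟩
      omega
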